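/- Let C be a commutative principal ideal domain with an infinite set P of nonzero prime ideals. Let C⁺ be the commutative C-algebra obtained from the polynomial ring over C in indeterminates y_p, one for each p ∈ P, by imposing the relations c·y_p = 0 for every c ∈ p and every p ∈ P. Set k = A = C⁺ and let M be the ideal of A generated by all the y_p. Let B be the field of fractions of C, made a k-algebra via the homomorphism k → C sending each y_p to 0 followed by the inclusion C → Frac(C), and let N be any nonzero B-vector space. Then M is a faithful A-module, N is a faithful B-module, A ⊗_k B is nonzero, but M ⊗_k N = 0, hence M ⊗_k N is not a faithful (A ⊗_k B)-module. -/

import Mathlib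

open TensorProduct

/-- The ideal of relations `c • y_p = 0` (for `c ∈ p`, `p ∈ P`) in the polynomial ring
over `C` in indeterminates `y_p`, `p ∈ P`. -/
noncomputable def CPlusRel (C : Type*) [CommRing C] (P : Set (Ideal C)) :
    Ideal (MvPolynomial (↥P) C) :=
  Ideal.span { f | ∃ (p : ↥P) (c : C), c ∈ (p : Ideal C) ∧
    f = MvPolynomial.C c * MvPolynomial.X p }

/-- The commutative `C`-algebra `C⁺`, obtained from the polynomial ring over `C` in
indeterminates `y_p` (`p ∈ P`) by imposing the relations `c·y_p = 0` for all `c ∈ p`. -/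
abbrev CPlus (C : Type*) [CommRing C] (P : Set (Ideal C)) : Type _ :=
  MvPolynomial (↥P) C ⧸ CPlusRel C P

/-- The ideal `M` of `k = A = C⁺` generated by all the `y_p`. -/
noncomputable def yIdeal (C : Type*) [CommRing C] (P : Set (Ideal C)) : Ideal (CPlus C P) :=
  Ideal.span (Set.range fun p : ↥P =>
    Ideal.Quotient.mk (CPlusRel C P) (MvPolynomial.X p))

/-- The ring homomorphism `C⁺ → C` sending each `y_p` to `0`. -/
noncomputable def CPlusToC (C : Type*) [CommRing C] (P : Set (Ideal C)) :
    CPlus C P →+* C :=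
  Ideal.Quotient.lift (CPlusRel C P)
    (MvPolynomial.aeval (fun _ : ↥P => (0 : C))).toRingHom
    (by
      intro a ha
      have h : CPlusRel C P ≤
          RingHom.ker (MvPolynomial.aeval (fun _ : ↥P => (0 : C))).toRingHom := by
        rw [CPlusRel, Ideal.span_le]
        rintro f ⟨p, c, _, rfl⟩
        simp [RingHom.mem_ker]
      exact h ha)

/-- `B = Frac(C)` is a `C⁺`-algebra via `C⁺ → C → Frac(C)` (each `y_p ↦ 0`). -/
noncomputable instance fracCPlusAlgebra (C : Type*) [CommRing C] [IsDomain C]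
    (P : Set (Ideal C)) : Algebra (CPlus C P) (FractionRing C) :=
  ((algebraMap C (FractionRing C)).comp (CPlusToC C P)).toAlgebra

set_option synthInstance.maxHeartbeats 1000000
set_option maxHeartbeats 1000000

section Aux

open MvPolynomial

variable {C : Type*} [CommRing C] {P : Set (Ideal C)}

/-- The ideal of allowed coefficients for the monomial `m` in `CPlusRel`. -/
noncomputable def cIdeal (P : Set (Ideal C)) (m : ↥P →₀ ℕ) : Ideal C :=
  Ideal.span (⋃ p ∈ m.support, ((p : Ideal C) : Set C))

lemma cIdeal_mono {m m' : ↥P →₀ ℕ} (h : m.support ⊆ m'.support) :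
    cIdeal P m ≤ cIdeal P m' := by
  apply Ideal.span_mono
  intro c hc
  obtain ⟨p, hp, hcp⟩ := Set.mem_iUnion₂.1 hc
  exact Set.mem_iUnion₂.2 ⟨p, h hp, hcp⟩

lemma coeff_mem_of_mem_rel {f : MvPolynomial (↥P) C} (hf : f ∈ CPlusRel C P)
    (m : ↥P →₀ ℕ) : coeff m f ∈ cIdeal P m := by
  classical
  refine Submodule.span_induction
    (p := fun g _ => ∀ m : ↥P →₀ ℕ, coeff m g ∈ cIdeal P m)
    ?_ ?_ ?_ ?_ hf m
  · rintro g ⟨p, c, hc, rfl⟩ m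
    rw [coeff_C_mul, coeff_X']
    split_ifs with h
    · rw [mul_one]
      refine Ideal.subset_span (Set.mem_iUnion₂.2 ⟨p, ?_, hc⟩)
      rw [← h, Finsupp.mem_support_iff, Finsupp.single_apply, if_pos rfl]
      exact one_ne_zero
    · rw [mul_zero]; exact zero_mem _
  · intro m; simp only [coeff_zero]; exact zero_mem _
  · intro x y _ _ hx hy m
    rw [coeff_add]; exact add_mem (hx m) (hy m)
  · intro a x _ hx m
    rw [smul_eq_mul, coeff_mul]
    refine Ideal.sum_mem _ fun z hz => ?_
    have hzm : z.1 + z.2 = m := Finset.HasAntidiagonal.mem_antidiagonal.1 hz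
    have hsub : z.2.support ⊆ m.support := by
      intro q hq
      rw [Finsupp.mem_support_iff] at hq ⊢
      rw [← hzm, Finsupp.add_apply]
      omega
    exact Ideal.mul_mem_left _ _ (cIdeal_mono hsub (hx z.2))

lemma monomial_mem_rel {m : ↥P →₀ ℕ} {d : C} (hd : d ∈ cIdeal P m) :
    MvPolynomial.monomial m d ∈ CPlusRel C P := by
  refine Submodule.span_induction ?_ ?_ ?_ ?_ hd
  · intro c hc
    obtain ⟨p, hp, hcp⟩ := Set.mem_iUnion₂.1 hc
    have h1 : Finsupp.single p 1 ≤ m := by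
      rw [Finsupp.single_le_iff]
      exact Nat.one_le_iff_ne_zero.2 (Finsupp.mem_support_iff.1 hp)
    have key : (monomial m) c
        = (MvPolynomial.C c * X p) * monomial (m - Finsupp.single p 1) 1 := by
      rw [← pow_one (X p), C_mul_X_pow_eq_monomial, monomial_mul, mul_one,
        add_tsub_cancel_of_le h1]
    rw [key]
    exact Ideal.mul_mem_right _ _ (Ideal.subset_span ⟨p, c, hcp, rfl⟩)
  · simp only [map_zero]; exact zero_mem _
  · intro x y _ _ hx hy
    rw [map_add]; exact add_mem hx hy
  · intro r x _ hx
    rw [smul_eq_mul, ← C_mul_monomial]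
    exact Ideal.mul_mem_left _ _ hx

lemma mem_rel_of_coeff {f : MvPolynomial (↥P) C}
    (h : ∀ m, coeff m f ∈ cIdeal P m) : f ∈ CPlusRel C P := by
  rw [f.as_sum]
  exact Ideal.sum_mem _ fun m _ => monomial_mem_rel (h m)

lemma eq_zero_of_mem_infinite_primes {C : Type*} [CommRing C] [IsDomain C]
    [IsPrincipalIdealRing C] {P : Set (Ideal C)} (hP : P.Infinite)
    (hprime : ∀ p ∈ P, p.IsPrime) (hne : ∀ p ∈ P, p ≠ ⊥)
    {c : C} (hc : ∀ q ∈ P, c ∈ q) : c = 0 := by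
  by_contra h
  have hI : Ideal.span {c} ≠ 0 := by
    simpa [Ideal.span_singleton_eq_bot] using h
  have hfin := Ideal.finite_factors hI
  refine hP ((hfin.image (fun v : IsDedekindDomain.HeightOneSpectrum C => v.asIdeal)).subset ?_)
  intro q hq
  refine ⟨⟨q, hprime q hq, hne q hq⟩, ?_, rfl⟩
  simp only [Set.mem_setOf_eq]
  rw [Ideal.dvd_iff_le]
  exact (Ideal.span_singleton_le_iff_mem _).2 (hc q hq)

end Aux

/-- **Counterexample (iii).**  Let `C` be a commutative principal ideal domain with an
infinite set `P` of nonzero prime ideals, let `k = A = C⁺` and let `M` be the ideal of `A`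
generated by all the `y_p`.  Let `B = Frac(C)`, a `k`-algebra via `y_p ↦ 0`, and let `N` be
any nonzero `B`-vector space (viewed as `k`-module by restriction of scalars).  Then `M` is
a faithful `A`-module, `N` is a faithful `B`-module, `A ⊗[k] B` is nonzero, but
`M ⊗[k] N = 0`; hence no `k`-linear action of `A ⊗[k] B` on `M ⊗[k] N` can be injective,
so `M ⊗[k] N` is not a faithful `(A ⊗[k] B)`-module. -/
theorem counterexample_CPlus_frac
    (C : Type*) [CommRing C] [IsDomain C] [IsPrincipalIdealRing C]
    (P : Set (Ideal C)) (hP : P.Infinite)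
    (hprime : ∀ p ∈ P, p.IsPrime) (hne : ∀ p ∈ P, p ≠ ⊥)
    (N : Type*) [AddCommGroup N] [Module (FractionRing C) N] [Nontrivial N]
    [Module (CPlus C P) N] [IsScalarTower (CPlus C P) (FractionRing C) N] :
    (∀ x : CPlus C P, (∀ m ∈ yIdeal C P, x * m = 0) → x = 0) ∧
    FaithfulSMul (FractionRing C) N ∧
    Nontrivial ((CPlus C P) ⊗[CPlus C P] (FractionRing C)) ∧
    Subsingleton ((↥(yIdeal C P)) ⊗[CPlus C P] N) ∧
    (∀ φ : ((CPlus C P) ⊗[CPlus C P] (FractionRing C)) →ₗ[CPlus C P]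
        Module.End (CPlus C P) ((↥(yIdeal C P)) ⊗[CPlus C P] N),
      ¬ Function.Injective φ) := by
  classical
  -- Part 1 : faithfulness of `M` over `A`.
  have part1 : ∀ x : CPlus C P, (∀ m ∈ yIdeal C P, x * m = 0) → x = 0 := by
    intro x h
    obtain ⟨f, rfl⟩ := Ideal.Quotient.mk_surjective x
    rw [Ideal.Quotient.eq_zero_iff_mem]
    apply mem_rel_of_coeff
    intro m
    have key : ∀ q : ↥P, f * MvPolynomial.X q ∈ CPlusRel C P := by
      intro q
      have hy : Ideal.Quotient.mk (CPlusRel C P) (MvPolynomial.X q) ∈ yIdeal C P :=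
        Ideal.subset_span ⟨q, rfl⟩
      have := h _ hy
      rwa [← map_mul, Ideal.Quotient.eq_zero_iff_mem] at this
    by_cases hm : m = 0
    · subst hm
      have hcq : ∀ q ∈ P, MvPolynomial.coeff 0 f ∈ q := by
        intro q hq
        set q' : ↥P := ⟨q, hq⟩
        have h1 := coeff_mem_of_mem_rel (key q') (0 + Finsupp.single q' 1)
        rw [MvPolynomial.coeff_mul_X] at h1
        rw [zero_add] at h1
        have h2 : cIdeal P (Finsupp.single q' 1) ≤ q := by
          rw [cIdeal, Ideal.span_le]
          intro c hc
          obtain ⟨p, hp, hcp⟩ := Set.mem_iUnion₂.1 hc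
          have : p = q' := by
            rwa [Finsupp.support_single_ne_zero q' one_ne_zero,
              Finset.mem_singleton] at hp
          rw [this] at hcp
          exact hcp
        exact h2 h1
      have : MvPolynomial.coeff 0 f = 0 :=
        eq_zero_of_mem_infinite_primes hP hprime hne hcq
      rw [this]
      exact zero_mem _
    · obtain ⟨p, hp⟩ : ∃ p, m p ≠ 0 := by
        by_contra hcon
        push_neg at hcon
        exact hm (Finsupp.ext fun a => hcon a)
      have h1 := coeff_mem_of_mem_rel (key p) (m + Finsupp.single p 1)
      rw [MvPolynomial.coeff_mul_X] at h1
      refine cIdeal_mono ?_ h1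
      intro q hq
      rw [Finsupp.mem_support_iff] at hq ⊢
      by_cases hqp : q = p
      · rw [hqp]; exact hp
      · rw [Finsupp.add_apply, Finsupp.single_apply,
          if_neg (fun hh => hqp hh.symm), add_zero] at hq
        exact hq
  -- Part 4 : `M ⊗ N = 0`.
  have tmul_zero : ∀ (x : CPlus C P) (hx : x ∈ yIdeal C P) (n : N),
      ((⟨x, hx⟩ : ↥(yIdeal C P)) ⊗ₜ[CPlus C P] n) = 0 := by
    intro x hx
    refine Submodule.span_induction
      (p := fun x hx => ∀ n : N,
        ((⟨x, hx⟩ : ↥(yIdeal C P)) ⊗ₜ[CPlus C P] n) = 0) ?_ ?_ ?_ ?_ hx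
    · rintro g ⟨p, rfl⟩ n
      obtain ⟨c, hcp, hc0⟩ := (Submodule.ne_bot_iff _).1 (hne p.1 p.2)
      have hc' : algebraMap C (FractionRing C) c ≠ 0 := fun hh =>
        hc0 ((IsFractionRing.to_map_eq_zero_iff (K := FractionRing C)).1 hh)
      set a : CPlus C P := Ideal.Quotient.mk _ (MvPolynomial.C c) with ha
      have haK : algebraMap (CPlus C P) (FractionRing C) a
          = algebraMap C (FractionRing C) c := by
        show ((algebraMap C (FractionRing C)).comp (CPlusToC C P)) a = _
        simp [ha, CPlusToC]
      have han : a • ((algebraMap C (FractionRing C) c)⁻¹ • n) = n := by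
        rw [← algebraMap_smul (FractionRing C) a, haK, smul_smul,
          mul_inv_cancel₀ hc', one_smul]
      have hmul : a • (⟨_, Submodule.subset_span ⟨p, rfl⟩⟩ : ↥(yIdeal C P)) = 0 := by
        have hz : a * Ideal.Quotient.mk (CPlusRel C P) (MvPolynomial.X p) = 0 := by
          rw [ha, ← map_mul, Ideal.Quotient.eq_zero_iff_mem]
          exact Ideal.subset_span ⟨p, c, hcp, rfl⟩
        exact Subtype.ext (by simpa [smul_eq_mul] using hz)
      calc (⟨_, Submodule.subset_span ⟨p, rfl⟩⟩ : ↥(yIdeal C P)) ⊗ₜ[CPlus C P] n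
          = (⟨_, Submodule.subset_span ⟨p, rfl⟩⟩ : ↥(yIdeal C P)) ⊗ₜ[CPlus C P]
            (a • ((algebraMap C (FractionRing C) c)⁻¹ • n)) := by rw [han]
        _ = (a • (⟨_, Submodule.subset_span ⟨p, rfl⟩⟩ : ↥(yIdeal C P))) ⊗ₜ[CPlus C P]
            ((algebraMap C (FractionRing C) c)⁻¹ • n) :=
            (TensorProduct.smul_tmul _ _ _).symm
        _ = 0 := by rw [hmul, TensorProduct.zero_tmul]
    · intro n
      have : (⟨0, Submodule.zero_mem _⟩ : ↥(yIdeal C P)) = 0 := rfl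
      rw [this, TensorProduct.zero_tmul]
    · intro u v hu hv ihu ihv n
      have : (⟨u + v, Submodule.add_mem _ hu hv⟩ : ↥(yIdeal C P))
          = ⟨u, hu⟩ + ⟨v, hv⟩ := rfl
      rw [this, TensorProduct.add_tmul, ihu, ihv, add_zero]
    · intro a u hu ihu n
      have : (⟨a • u, Submodule.smul_mem _ a hu⟩ : ↥(yIdeal C P))
          = a • ⟨u, hu⟩ := rfl
      rw [this]
      have h4 : (a • (⟨u, hu⟩ : ↥(yIdeal C P))) ⊗ₜ[CPlus C P] n
          = a • ((⟨u, hu⟩ : ↥(yIdeal C P)) ⊗ₜ[CPlus C P] n) :=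
        (TensorProduct.smul_tmul' a (⟨u, hu⟩ : ↥(yIdeal C P)) n).symm
      rw [h4, ihu n, smul_zero]
  have hss : Subsingleton ((↥(yIdeal C P)) ⊗[CPlus C P] N) := by
    refine subsingleton_of_forall_eq 0 fun x => ?_
    induction x using TensorProduct.induction_on with
    | zero => rfl
    | tmul m n => exact tmul_zero m.1 m.2 n
    | add x y hx hy => rw [hx, hy, add_zero]
  have hnt : Nontrivial ((CPlus C P) ⊗[CPlus C P] (FractionRing C)) :=
    (Algebra.TensorProduct.lid (CPlus C P) (FractionRing C)).toEquiv.nontrivial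
  refine ⟨part1, ⟨fun {a b} h => ?_⟩, hnt, hss, ?_⟩
  · obtain ⟨n, hn⟩ := exists_ne (0 : N)
    have h1 : (a - b) • n = 0 := by rw [sub_smul, h n, sub_self]
    rcases smul_eq_zero.1 h1 with h2 | h2
    · exact sub_eq_zero.1 h2
    · exact absurd h2 hn
  · intro φ hφ
    have h2 : Subsingleton (Module.End (CPlus C P) ((↥(yIdeal C P)) ⊗[CPlus C P] N)) :=
      ⟨fun f g => LinearMap.ext fun x => Subsingleton.elim _ _⟩
    obtain ⟨x, y, hxy⟩ := hnt
    exact hxy (hφ (Subsingleton.elim _ _))
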